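/- arXiv:2006.04977 — 8 statements merged into one kernel-verified Lean document; each statement's English description precedes it below -/
import Mathlib

section
/- If F and G are formal power series with zero constant term satisfying F = z*G/(1-G) and G = z/(1-F), then F(z) = z^2 * M(z), where M is the Motzkin generating function. -/
open PowerSeries

/-- If `F`, `G` are formal power series with zero constant term satisfying
`F = z·G/(1-G)` and `G = z/(1-F)`, then `F = z²·M(z)` where `M` is the Motzkin
generating function (the unique series with constant term 1 and `M = 1 + zM + z²M²`). -/
theorem F_eq_zsq_motzkin
    (F G M : PowerSeries ℚ)
    (hF0 : constantCoeff F = 0) (hG0 : constantCoeff G = 0)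
    (hF : F = X * G * (1 - G)⁻¹)
    (hG : G = X * (1 - F)⁻¹)
    (hM0 : constantCoeff M = 1)
    (hM : M = 1 + X * M + X ^ 2 * M ^ 2) :
    F = X ^ 2 * M := by
  have hGne : constantCoeff (1 - G) ≠ 0 := by simp [hG0]
  have hFne : constantCoeff (1 - F) ≠ 0 := by simp [hF0]
  have h1 : F * (1 - G) = X * G := by
    calc F * (1 - G) = X * G * ((1 - G)⁻¹ * (1 - G)) := by rw [hF]; ring
    _ = X * G := by rw [PowerSeries.inv_mul_cancel _ hGne, mul_one]
  have h2 : G * (1 - F) = X := by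
    calc G * (1 - F) = X * ((1 - F)⁻¹ * (1 - F)) := by rw [hG]; ring
    _ = X := by rw [PowerSeries.inv_mul_cancel _ hFne, mul_one]
  have e1 : F = X ^ 2 + X * F + F ^ 2 := by
    linear_combination (1 - F) * h1 + (X + F) * h2
  have e2 : X ^ 2 * M = X ^ 2 + X * (X ^ 2 * M) + (X ^ 2 * M) ^ 2 := by
    linear_combination (X ^ 2 : PowerSeries ℚ) * hM
  have key : (F - X ^ 2 * M) * (1 - X - F - X ^ 2 * M) = 0 := by
    linear_combination e1 - e2
  have hne : (1 - X - F - X ^ 2 * M : PowerSeries ℚ) ≠ 0 := by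
    intro h
    have := congrArg (constantCoeff) h
    simp [hF0, hG0] at this
  rcases mul_eq_zero.mp key with h | h
  · exact sub_eq_zero.mp h
  · exact absurd h hne
end

section
/- Under the substitution z = v/(1 + v + v^2), the Motzkin generating function satisfies M(z) = 1 + v + v^2 as an identity of formal power series in v. -/
open PowerSeries Finset

variable {a : PowerSeries ℚ}

/-- Composition `f(a)` of formal power series, for `a` with zero constant term:
the `n`-th coefficient only depends on the truncation of `f` below degree `n+1`. -/
noncomputable def PowerSeries.comp (f a : PowerSeries ℚ) : PowerSeries ℚ :=
  PowerSeries.mk fun n => coeff n (Polynomial.aeval a (trunc (n + 1) f))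

variable {a : PowerSeries ℚ}

lemma coeff_pow_eq_zero (ha : constantCoeff a = 0) {n k : ℕ} (h : n < k) :
    coeff n (a ^ k) = 0 := by
  have hd : (X : PowerSeries ℚ) ^ k ∣ a ^ k :=
    pow_dvd_pow_of_dvd (PowerSeries.X_dvd_iff.mpr ha) k
  exact (PowerSeries.X_pow_dvd_iff.mp hd) n h

lemma coeff_aeval_congr (ha : constantCoeff a = 0) (n : ℕ) {P Q : Polynomial ℚ}
    (h : ∀ k ≤ n, P.coeff k = Q.coeff k) :
    coeff n (Polynomial.aeval a P) = coeff n (Polynomial.aeval a Q) := by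
  have hP : P.natDegree < max P.natDegree Q.natDegree + 1 := by omega
  have hQ : Q.natDegree < max P.natDegree Q.natDegree + 1 := by omega
  rw [Polynomial.aeval_eq_sum_range' hP, Polynomial.aeval_eq_sum_range' hQ,
    map_sum, map_sum]
  refine Finset.sum_congr rfl fun k hk => ?_
  by_cases hkn : k ≤ n
  · rw [h k hkn]
  · rw [coeff_smul, coeff_smul, coeff_pow_eq_zero ha (by omega),
      smul_zero, smul_zero]

lemma coeff_comp (f : PowerSeries ℚ) (n : ℕ) :
    coeff n (PowerSeries.comp f a) = coeff n (Polynomial.aeval a (trunc (n + 1) f)) := by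
  simp [PowerSeries.comp, coeff_mk]

lemma coeff_comp_le (ha : constantCoeff a = 0) (f : PowerSeries ℚ) {i n : ℕ}
    (hin : i ≤ n) :
    coeff i (PowerSeries.comp f a) = coeff i (Polynomial.aeval a (trunc (n + 1) f)) := by
  rw [coeff_comp]
  refine coeff_aeval_congr ha i fun k hk => ?_
  rw [coeff_trunc, coeff_trunc, if_pos (by omega), if_pos (by omega)]

lemma comp_one : PowerSeries.comp (1 : PowerSeries ℚ) a = 1 := by
  ext n
  rw [coeff_comp, trunc_one, map_one]

lemma comp_X (ha : constantCoeff a = 0) : PowerSeries.comp (X : PowerSeries ℚ) a = a := by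
  ext n
  rw [coeff_comp]
  have : coeff n (Polynomial.aeval a (trunc (n + 1) (X : PowerSeries ℚ))) =
      coeff n (Polynomial.aeval a (Polynomial.X : Polynomial ℚ)) := by
    refine coeff_aeval_congr ha n fun k hk => ?_
    rw [coeff_trunc, if_pos (by omega), coeff_X, Polynomial.coeff_X]
    split_ifs <;> first | rfl | omega
  rw [this, Polynomial.aeval_X]

lemma comp_add (f g : PowerSeries ℚ) : PowerSeries.comp (f + g) a = PowerSeries.comp f a + PowerSeries.comp g a := by
  ext n
  rw [map_add, coeff_comp, coeff_comp, coeff_comp, map_add, map_add, map_add]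

lemma comp_mul (ha : constantCoeff a = 0) (f g : PowerSeries ℚ) :
    PowerSeries.comp (f * g) a = PowerSeries.comp f a * PowerSeries.comp g a := by
  ext n
  have key : coeff n (PowerSeries.comp (f * g) a) =
      coeff n (Polynomial.aeval a (trunc (n + 1) f * trunc (n + 1) g)) := by
    rw [coeff_comp]
    refine coeff_aeval_congr ha n fun k hk => ?_
    have := congrArg (fun p => Polynomial.coeff p k) (trunc_trunc_mul_trunc (n := n + 1) f g)
    rw [← this, coeff_trunc, if_pos (by omega), ← Polynomial.coeff_coe,
      Polynomial.coe_mul]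
  rw [key, map_mul, PowerSeries.coeff_mul, PowerSeries.coeff_mul]
  refine Finset.sum_congr rfl fun p hp => ?_
  rw [Finset.HasAntidiagonal.mem_antidiagonal] at hp
  rw [coeff_comp_le ha f (show p.1 ≤ n by omega), coeff_comp_le ha g (show p.2 ≤ n by omega)]

/-- Under the substitution `z = v/(1+v+v²)`, the Motzkin generating function satisfies
`M(z) = 1 + v + v²` as formal power series in `v`. -/
theorem motzkin_subst
    (M : PowerSeries ℚ)
    (hM0 : constantCoeff M = 1)
    (hM : M = 1 + X * M + X ^ 2 * M ^ 2) :
    PowerSeries.comp M (X * (1 + X + X ^ 2)⁻¹) = 1 + X + X ^ 2 := by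
  set a : PowerSeries ℚ := X * (1 + X + X ^ 2)⁻¹ with ha_def
  have ha : constantCoeff a = 0 := by
    simp [ha_def]
  have hc : constantCoeff (1 + X + X ^ 2 : PowerSeries ℚ) ≠ 0 := by
    simp
  have hu : (1 + X + X ^ 2 : PowerSeries ℚ)⁻¹ * (1 + X + X ^ 2) = 1 :=
    PowerSeries.inv_mul_cancel _ hc
  set S : PowerSeries ℚ := 1 + X + X ^ 2 with hS_def
  set Y : PowerSeries ℚ := PowerSeries.comp M a with hY_def
  have haS : a * S = X := by
    rw [ha_def, mul_assoc, hu, mul_one]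
  have eqY : Y = 1 + a * Y + a ^ 2 * Y ^ 2 := by
    have h2 : (X ^ 2 * M ^ 2 : PowerSeries ℚ) = (X * M) * (X * M) := by ring
    calc Y = PowerSeries.comp (1 + X * M + X ^ 2 * M ^ 2) a := by rw [hY_def, ← hM]
    _ = 1 + a * Y + a ^ 2 * Y ^ 2 := by
        rw [h2, comp_add, comp_add, comp_one, comp_mul ha, comp_mul ha, comp_mul ha,
          comp_X ha, ← hY_def]
        ring
  have eqS : S = 1 + a * S + a ^ 2 * S ^ 2 := by
    have : a ^ 2 * S ^ 2 = (a * S) * (a * S) := by ring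
    rw [this, haS, hS_def]
    ring
  have hfac : (Y - S) * (1 - a - a ^ 2 * (Y + S)) = 0 := by
    linear_combination eqY - eqS
  have hne : (1 - a - a ^ 2 * (Y + S) : PowerSeries ℚ) ≠ 0 := by
    intro h
    have := congrArg (constantCoeff) h
    simp [ha] at this
  rcases mul_eq_zero.mp hfac with h | h
  · exact sub_eq_zero.mp h
  · exact absurd h hne
end

section
/- Define the sequence of rational functions G_1 = z and G_{k+1} = z / (1 - z*G_k/(1-G_k)). Then under the substitution z = v/(1+v+v^2), for all k >= 1, G_k = (v/(1+v)) * (1 - v^{2k})/(1 - v^{2k+1}) as rational functions in v. -/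
open RatFunc

lemma poly_ne_zero_of_eval_zero (p : Polynomial ℚ) (h : p.eval 0 ≠ 0) :
    (algebraMap (Polynomial ℚ) (RatFunc ℚ)) p ≠ 0 := by
  apply RatFunc.algebraMap_ne_zero
  intro hp; exact h (by simp [hp])

lemma one_sub_X_pow_ne_zero (n : ℕ) (hn : 1 ≤ n) : (1 - X ^ n : RatFunc ℚ) ≠ 0 := by
  have : (1 - X ^ n : RatFunc ℚ)
      = algebraMap (Polynomial ℚ) (RatFunc ℚ) (1 - Polynomial.X ^ n) := by
    simp [RatFunc.algebraMap_X]
  rw [this]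
  apply poly_ne_zero_of_eval_zero
  simp [Polynomial.eval_pow, zero_pow (by omega : n ≠ 0)]

lemma one_add_X_ne_zero : (1 + X : RatFunc ℚ) ≠ 0 := by
  have : (1 + X : RatFunc ℚ)
      = algebraMap (Polynomial ℚ) (RatFunc ℚ) (1 + Polynomial.X) := by
    simp [RatFunc.algebraMap_X]
  rw [this]
  apply poly_ne_zero_of_eval_zero
  simp

lemma denom3_ne_zero : (1 + X + X ^ 2 : RatFunc ℚ) ≠ 0 := by
  have : (1 + X + X ^ 2 : RatFunc ℚ)
      = algebraMap (Polynomial ℚ) (RatFunc ℚ) (1 + Polynomial.X + Polynomial.X ^ 2) := by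
    simp [RatFunc.algebraMap_X]
  rw [this]
  apply poly_ne_zero_of_eval_zero
  simp

/-- With `z = v/(1+v+v²)`, the rational functions defined by `G_1 = z`,
`G_{k+1} = z/(1 - z·G_k/(1-G_k))` satisfy
`G_k = (v/(1+v)) · (1-v^{2k})/(1-v^{2k+1})` for all `k ≥ 1`. -/
theorem G_closed_form
    (G : ℕ → RatFunc ℚ)
    (z : RatFunc ℚ) (hz : z = X / (1 + X + X ^ 2))
    (hG1 : G 1 = z)
    (hGrec : ∀ k ≥ 1, G (k + 1) = z / (1 - z * G k / (1 - G k))) :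
    ∀ k ≥ 1, G k = X / (1 + X) * ((1 - X ^ (2 * k)) / (1 - X ^ (2 * k + 1))) := by
  intro k hk
  induction k with
  | zero => omega
  | succ n ih =>
    rcases Nat.eq_or_lt_of_le hk with h1 | h1
    · -- base case n+1 = 1
      have hn : n = 0 := by omega
      subst hn
      rw [hG1, hz]
      have h2 : (1 - X ^ (2 * 1) : RatFunc ℚ) ≠ 0 := one_sub_X_pow_ne_zero 2 (by norm_num)
      have h3 : (1 - X ^ (2 * 1 + 1) : RatFunc ℚ) ≠ 0 := one_sub_X_pow_ne_zero 3 (by norm_num)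
      field_simp [one_add_X_ne_zero, denom3_ne_zero]
      ring
    · have hn1 : 1 ≤ n := by omega
      have ihn := ih hn1
      have hX1 := one_add_X_ne_zero
      have hD := denom3_ne_zero
      have h1a : (1 - X ^ (2 * n) : RatFunc ℚ) ≠ 0 := one_sub_X_pow_ne_zero _ (by omega)
      have h1b : (1 - X ^ (2 * n + 1) : RatFunc ℚ) ≠ 0 := one_sub_X_pow_ne_zero _ (by omega)
      have h1c : (1 - X ^ (2 * n + 2) : RatFunc ℚ) ≠ 0 := one_sub_X_pow_ne_zero _ (by omega)
      have h1d : (1 - X ^ (2 * n + 3) : RatFunc ℚ) ≠ 0 := one_sub_X_pow_ne_zero _ (by omega)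
      have hsub : (1 - G n : RatFunc ℚ)
          = (1 - X ^ (2 * n + 2)) / ((1 + X) * (1 - X ^ (2 * n + 1))) := by
        rw [ihn]
        field_simp
        ring_nf
      have hmain : (1 - z * G n / (1 - G n) : RatFunc ℚ)
          = (1 + X) * (1 - X ^ (2 * n + 3)) / ((1 + X + X ^ 2) * (1 - X ^ (2 * n + 2))) := by
        rw [hsub, ihn, hz]
        field_simp
        ring_nf
      rw [hGrec n hn1, hmain, hz]
      have hnum : ((1 + X) * (1 - X ^ (2 * n + 3)) : RatFunc ℚ) ≠ 0 :=
        mul_ne_zero hX1 h1d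
      have h2a : (1 - X ^ (2 * (n + 1)) : RatFunc ℚ) ≠ 0 := one_sub_X_pow_ne_zero _ (by omega)
      have h2b : (1 - X ^ (2 * (n + 1) + 1) : RatFunc ℚ) ≠ 0 := one_sub_X_pow_ne_zero _ (by omega)
      have e1 : 2 * (n + 1) = 2 * n + 2 := by ring
      have e2 : 2 * n + 2 + 1 = 2 * n + 3 := by ring
      rw [e1, e2]
      rw [div_div_div_eq]
      field_simp
end

section
/- For n >= 1, the coefficient of z^{n+1} in the formal power series ((1-v^2)/v) * sum_{h>=1} v^{2h}/(1-v^{2h}), where z = v/(1+v+v^2), equals sum_{h>=1} d(h) * [ T(n, n+2-2h) - 2*T(n, n-2h) + T(n, n-2-2h) ], where T(n,k) is the trinomial coefficient [v^k](1+v+v^2)^n and d(h) is the divisor function. -/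
open PowerSeries Finset

/-- The trinomial coefficient `T(n,k) = [v^k](1+v+v²)^n`, with `T(n,k) = 0` for `k < 0`. -/
noncomputable def trinom (n : ℕ) (k : ℤ) : ℚ :=
  if k < 0 then 0 else coeff k.toNat ((1 + X + X ^ 2) ^ n)


lemma aux_coeff_pow_eq_zero {a : PowerSeries ℚ} (ha : constantCoeff a = 0)
    {m d : ℕ} (h : m < d) : coeff m (a ^ d) = 0 := by
  have hd : (X : PowerSeries ℚ) ^ d ∣ a ^ d :=
    pow_dvd_pow_of_dvd (PowerSeries.X_dvd_iff.mpr ha) d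
  exact PowerSeries.X_pow_dvd_iff.mp hd m h

lemma aux_coeff_aeval {a : PowerSeries ℚ} (ha : constantCoeff a = 0)
    (p : Polynomial ℚ) (m : ℕ) :
    coeff m (Polynomial.aeval a p) = ∑ d ∈ range (m + 1), p.coeff d * coeff m (a ^ d) := by
  have hlt : p.natDegree < max (p.natDegree + 1) (m + 1) :=
    lt_of_lt_of_le (Nat.lt_succ_self _) (le_max_left _ _)
  rw [Polynomial.aeval_eq_sum_range' hlt, map_sum]
  have h1 : ∀ d ∈ range (max (p.natDegree + 1) (m + 1)),
      coeff m (p.coeff d • a ^ d) = p.coeff d * coeff m (a ^ d) := by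
    intro d _; rw [map_smul, smul_eq_mul]
  rw [Finset.sum_congr rfl h1]
  refine (Finset.sum_subset (Finset.range_subset_range.mpr (le_max_right _ _)) ?_).symm
  intro x _ hx
  rw [aux_coeff_pow_eq_zero ha (by simpa using hx), mul_zero]

lemma aux_coeff_comp {a : PowerSeries ℚ} (ha : constantCoeff a = 0)
    (f : PowerSeries ℚ) (m : ℕ) :
    coeff m (f.comp a) = ∑ d ∈ range (m + 1), coeff d f * coeff m (a ^ d) := by
  rw [PowerSeries.comp, coeff_mk, aux_coeff_aeval ha]
  exact Finset.sum_congr rfl fun d hd => by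
    rw [coeff_trunc, if_pos (mem_range.mp hd)]

lemma aux_comp_one {a : PowerSeries ℚ} (ha : constantCoeff a = 0) :
    (1 : PowerSeries ℚ).comp a = 1 := by
  ext m
  rw [aux_coeff_comp ha]
  rw [Finset.sum_eq_single 0 (fun d _ hd => by rw [coeff_one, if_neg hd, zero_mul])
    (fun h => absurd (mem_range.mpr (Nat.succ_pos m)) h)]
  simp

lemma aux_comp_mul {a : PowerSeries ℚ} (ha : constantCoeff a = 0)
    (f g : PowerSeries ℚ) : (f * g).comp a = f.comp a * g.comp a := by
  ext m
  have M2 : ∀ (u : PowerSeries ℚ) (i : ℕ), i ≤ m →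
      coeff i (u.comp a) = coeff i (Polynomial.aeval a (trunc (m + 1) u)) := by
    intro u i hi
    rw [aux_coeff_comp ha, aux_coeff_aeval ha]
    exact Finset.sum_congr rfl fun d hd => by
      rw [coeff_trunc, if_pos (by have := mem_range.mp hd; omega)]
  have mulcoeff : ∀ (A A' B B' : PowerSeries ℚ),
      (∀ i ≤ m, coeff i A = coeff i A') → (∀ i ≤ m, coeff i B = coeff i B') →
      coeff m (A * B) = coeff m (A' * B') := by
    intro A A' B B' hA hB
    rw [coeff_mul, coeff_mul]
    refine Finset.sum_congr rfl fun p hp => ?_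
    have hmem := Finset.HasAntidiagonal.mem_antidiagonal.mp hp
    rw [hA p.1 (by omega), hB p.2 (by omega)]
  calc coeff m ((f * g).comp a)
      = ∑ d ∈ range (m + 1), coeff d (f * g) * coeff m (a ^ d) := aux_coeff_comp ha _ m
    _ = ∑ d ∈ range (m + 1),
          (trunc (m + 1) f * trunc (m + 1) g).coeff d * coeff m (a ^ d) := by
        refine Finset.sum_congr rfl fun d hd => ?_
        have hdm := mem_range.mp hd
        rw [Polynomial.coeff_mul, coeff_mul]
        congr 1
        refine Finset.sum_congr rfl fun p hp => ?_
        have hmem := Finset.HasAntidiagonal.mem_antidiagonal.mp hp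
        rw [coeff_trunc, coeff_trunc, if_pos (by omega), if_pos (by omega)]
    _ = coeff m (Polynomial.aeval a (trunc (m + 1) f * trunc (m + 1) g)) :=
        (aux_coeff_aeval ha _ m).symm
    _ = coeff m (Polynomial.aeval a (trunc (m + 1) f) * Polynomial.aeval a (trunc (m + 1) g)) := by
        rw [map_mul]
    _ = coeff m (f.comp a * g.comp a) :=
        mulcoeff _ _ _ _ (fun i hi => (M2 f i hi).symm) (fun i hi => (M2 g i hi).symm)

lemma aux_comp_pow {a : PowerSeries ℚ} (ha : constantCoeff a = 0)
    (f : PowerSeries ℚ) (k : ℕ) : (f ^ k).comp a = f.comp a ^ k := by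
  induction k with
  | zero => simpa using aux_comp_one ha
  | succ k ih => rw [pow_succ, aux_comp_mul ha, ih, pow_succ]

noncomputable def aux_geom (c : ℕ) : PowerSeries ℚ :=
  PowerSeries.mk fun m => if c ∣ m then 1 else 0

lemma aux_coeff_geom (c m : ℕ) : coeff m (aux_geom c) = if c ∣ m then 1 else 0 :=
  coeff_mk _ _

lemma aux_geom_eq {c : ℕ} (hc : 1 ≤ c) :
    (1 - X ^ c : PowerSeries ℚ)⁻¹ = aux_geom c := by
  have hX : constantCoeff ((X : PowerSeries ℚ) ^ c) = 0 := by
    rw [map_pow, constantCoeff_X, zero_pow (by omega)]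
  have h0 : constantCoeff (1 - X ^ c : PowerSeries ℚ) ≠ 0 := by
    simp [map_sub, hX]
  rw [PowerSeries.inv_eq_iff_mul_eq_one h0]
  have hsplit : aux_geom c * (1 - X ^ c) = aux_geom c - aux_geom c * X ^ c := by ring
  rw [hsplit]
  ext m
  rw [map_sub, aux_coeff_geom, PowerSeries.coeff_mul_X_pow', coeff_one]
  rcases Nat.eq_zero_or_pos m with hm | hm
  · subst hm
    rw [if_pos (dvd_zero c), if_neg (by omega : ¬ c ≤ 0), if_pos rfl]; ring
  · rw [if_neg (by omega : ¬ m = 0)]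
    by_cases hcm : c ≤ m
    · rw [if_pos hcm, aux_coeff_geom]
      have hiff : c ∣ m ↔ c ∣ m - c := by
        constructor
        · intro h; exact Nat.dvd_sub h dvd_rfl
        · intro h
          have := Nat.dvd_add h (dvd_refl c)
          rwa [Nat.sub_add_cancel hcm] at this
      by_cases hd : c ∣ m
      · rw [if_pos hd, if_pos (hiff.mp hd)]; ring
      · rw [if_neg hd, if_neg (fun hh => hd (hiff.mpr hh))]; ring
    · rw [if_neg hcm, if_neg (fun hd => hcm (Nat.le_of_dvd hm hd))]; ring

noncomputable def auxq : Polynomial ℚ := 1 + Polynomial.X + Polynomial.X ^ 2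

lemma auxq_natDegree : auxq.natDegree = 2 := by unfold auxq; compute_degree!

lemma auxq_monic : auxq.Monic := by
  have h : auxq = Polynomial.X ^ 2 + (1 + Polynomial.X) := by unfold auxq; ring
  rw [h]
  apply Polynomial.monic_X_pow_add
  apply lt_of_le_of_lt (Polynomial.degree_add_le _ _)
  simp only [Polynomial.degree_one, Polynomial.degree_X]
  norm_num

lemma auxq_reverse : auxq.reverse = auxq := by
  ext i
  rw [Polynomial.coeff_reverse, auxq_natDegree]
  have hcoeff : ∀ j : ℕ, auxq.coeff j = if j = 0 then 1 else if j = 1 then 1 else if j = 2 then 1 else 0 := by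
    intro j
    unfold auxq
    rcases j with _|_|_|j <;>
      simp [Polynomial.coeff_one, Polynomial.coeff_X, Polynomial.coeff_X_pow]
  rcases (by omega : i ≤ 2 ∨ 2 < i) with hi | hi
  · rw [Polynomial.revAt_le hi, hcoeff, hcoeff]
    interval_cases i <;> norm_num
  · rw [Polynomial.revAt_eq_self_of_lt hi]

lemma auxq_reverse_pow (M : ℕ) : (auxq ^ M).reverse = auxq ^ M := by
  induction M with
  | zero => simp [Polynomial.reverse]
  | succ k ih => rw [pow_succ, Polynomial.reverse_mul_of_domain, ih, auxq_reverse]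

lemma aux_trinom_symm (M : ℕ) (hM : 1 ≤ M) :
    coeff (M + 1) ((1 + X + X ^ 2 : PowerSeries ℚ) ^ M) =
    coeff (M - 1) ((1 + X + X ^ 2 : PowerSeries ℚ) ^ M) := by
  have hcoe : ((auxq ^ M : Polynomial ℚ) : PowerSeries ℚ) = (1 + X + X ^ 2 : PowerSeries ℚ) ^ M := by
    unfold auxq
    push_cast
    rfl
  have hdegM : (auxq ^ M).natDegree = 2 * M := by
    rw [auxq_monic.natDegree_pow, auxq_natDegree, mul_comm]
  rw [← hcoe, Polynomial.coeff_coe, Polynomial.coeff_coe]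
  conv_lhs => rw [← auxq_reverse_pow M]
  rw [Polynomial.coeff_reverse, hdegM, Polynomial.revAt_le (by omega)]
  congr 1
  omega

lemma aux_trinom_eq (n K j : ℕ) :
    trinom n ((K : ℤ) - (j : ℤ)) =
      coeff K ((X : PowerSeries ℚ) ^ j * (1 + X + X ^ 2) ^ n) := by
  rw [PowerSeries.coeff_X_pow_mul', trinom]
  by_cases hj : j ≤ K
  · rw [if_pos hj, if_neg (by omega)]
    have ht : ((K : ℤ) - (j : ℤ)).toNat = K - j := by omega
    rw [ht]
  · rw [if_neg hj, if_pos (by omega)]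

lemma aux_divisors_filter (m n : ℕ) (h1 : 1 ≤ m) (h2 : m ≤ n + 1) :
    (Icc 1 (n + 1)).filter (· ∣ m) = m.divisors := by
  ext d
  simp only [mem_filter, mem_Icc, Nat.mem_divisors]
  constructor
  · rintro ⟨⟨_, _⟩, hd⟩; exact ⟨hd, by omega⟩
  · rintro ⟨hd, -⟩
    have hdm := Nat.le_of_dvd (by omega) hd
    have hd1 := Nat.pos_of_dvd_of_pos hd (by omega)
    exact ⟨⟨hd1, by omega⟩, hd⟩

lemma aux_coeff_term (n h : ℕ) (hh : 1 ≤ h) (P : PowerSeries ℚ) :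
    coeff (n + 1) ((X : PowerSeries ℚ) ^ (2 * h - 1) * (aux_geom (2 * h) * P)) =
      ∑ m ∈ Icc 1 (n + 1),
        if h ∣ m ∧ 2 * m ≤ n + 2 then coeff (n + 2 - 2 * m) P else 0 := by
  by_cases hc : 2 * h ≤ n + 2
  · -- main case
    rw [PowerSeries.coeff_X_pow_mul', if_pos (by omega : 2 * h - 1 ≤ n + 1)]
    obtain ⟨L, hLk⟩ : ∃ L, n + 2 = 2 * h + L := ⟨n + 2 - 2 * h, by omega⟩
    have hL : n + 1 - (2 * h - 1) = L := by omega
    rw [hL, coeff_mul, Finset.Nat.sum_antidiagonal_eq_sum_range_succ_mk]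
    have step1 : ∀ i ∈ range (L + 1),
        coeff i (aux_geom (2 * h)) * coeff (L - i) P =
          if 2 * h ∣ i then coeff (L - i) P else 0 := by
      intro i _
      rw [aux_coeff_geom]
      by_cases hd : 2 * h ∣ i
      · rw [if_pos hd, if_pos hd, one_mul]
      · rw [if_neg hd, if_neg hd, zero_mul]
    rw [Finset.sum_congr rfl step1, ← Finset.sum_filter, ← Finset.sum_filter]
    refine Finset.sum_nbij' (fun i => h + i / 2) (fun m => 2 * m - 2 * h) ?_ ?_ ?_ ?_ ?_
    · intro i hi
      simp only [mem_filter, mem_range] at hi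
      obtain ⟨hiL, t, rfl⟩ := hi
      have h2 : 2 * h * t = 2 * (h * t) := by ring
      rw [h2, Nat.mul_div_cancel_left _ (by norm_num : 0 < 2)]
      simp only [mem_filter, mem_Icc]
      refine ⟨⟨by omega, by omega⟩, ⟨1 + t, by ring⟩, by omega⟩
    · intro m hm
      simp only [mem_filter, mem_Icc] at hm
      obtain ⟨⟨hm1, hm2⟩, ⟨s, rfl⟩, hle⟩ := hm
      have hs1 : 1 ≤ s := by
        rcases Nat.eq_zero_or_pos s with rfl | h0
        · simp at hm1
        · exact h0
      obtain ⟨t, rfl⟩ := Nat.exists_eq_add_of_le hs1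
      have hm' : h * (1 + t) = h + h * t := by ring
      simp only [mem_filter, mem_range]
      have he : 2 * h * t = 2 * (h * t) := by ring
      exact ⟨by omega, ⟨t, by omega⟩⟩
    · intro i hi
      simp only [mem_filter, mem_range] at hi
      obtain ⟨hiL, t, rfl⟩ := hi
      have h2 : 2 * h * t = 2 * (h * t) := by ring
      rw [h2, Nat.mul_div_cancel_left _ (by norm_num : 0 < 2)]
      omega
    · intro m hm
      simp only [mem_filter, mem_Icc] at hm
      obtain ⟨⟨hm1, hm2⟩, ⟨s, rfl⟩, hle⟩ := hm
      have hs1 : 1 ≤ s := by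
        rcases Nat.eq_zero_or_pos s with rfl | h0
        · simp at hm1
        · exact h0
      obtain ⟨t, rfl⟩ := Nat.exists_eq_add_of_le hs1
      have hm' : h * (1 + t) = h + h * t := by ring
      have h2 : 2 * (h * (1 + t)) - 2 * h = 2 * (h * t) := by omega
      rw [h2, Nat.mul_div_cancel_left _ (by norm_num : 0 < 2)]
      omega
    · intro i hi
      simp only [mem_filter, mem_range] at hi
      obtain ⟨hiL, t, rfl⟩ := hi
      have h2 : 2 * h * t = 2 * (h * t) := by ring
      rw [h2, Nat.mul_div_cancel_left _ (by norm_num : 0 < 2)]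
      have hidx : L - 2 * (h * t) = n + 2 - 2 * (h + h * t) := by omega
      rw [hidx]
  · -- degenerate case : 2h > n+2
    rw [PowerSeries.coeff_X_pow_mul', if_neg (by omega : ¬ 2 * h - 1 ≤ n + 1)]
    refine (Finset.sum_eq_zero fun m hm => ?_).symm
    simp only [mem_Icc] at hm
    rw [if_neg]
    rintro ⟨hd, hle⟩
    have := Nat.le_of_dvd (by omega) hd
    omega

lemma aux_phi_const : constantCoeff (1 + X + X ^ 2 : PowerSeries ℚ) = 1 := by
  simp [map_add, map_pow, constantCoeff_X]

lemma aux_orth (k m : ℕ) (hk : 1 ≤ k) (hm : 1 ≤ m) :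
    coeff m ((X * (1 + X + X ^ 2)⁻¹ : PowerSeries ℚ) ^ k *
      ((1 - X ^ 2) * (1 + X + X ^ 2) ^ (m - 1))) = if k = m then 1 else 0 := by
  set Φ : PowerSeries ℚ := 1 + X + X ^ 2 with hΦdef
  have hΦ0 : constantCoeff Φ ≠ 0 := by rw [aux_phi_const]; norm_num
  rcases lt_trichotomy k m with hlt | heq | hgt
  · -- k < m : coefficient is 0 by trinomial symmetry
    obtain ⟨M, rfl⟩ : ∃ M, m = k + M + 1 := ⟨m - k - 1, by omega⟩
    have hsub : k + M + 1 - 1 = k + M := by omega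
    rw [hsub, if_neg (by omega)]
    have h1 : ((Φ⁻¹ : PowerSeries ℚ)) ^ k * Φ ^ k = 1 := by
      rw [← mul_pow, PowerSeries.inv_mul_cancel _ hΦ0, one_pow]
    have hre : (X * Φ⁻¹ : PowerSeries ℚ) ^ k * ((1 - X ^ 2) * Φ ^ (k + M))
        = X ^ k * ((1 - X ^ 2) * Φ ^ M) * ((Φ⁻¹) ^ k * Φ ^ k) := by
      rw [mul_pow, pow_add]; ring
    rw [hre, h1, mul_one, PowerSeries.coeff_X_pow_mul', if_pos (by omega)]
    have hidx : k + M + 1 - k = M + 1 := by omega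
    rw [hidx]
    have hsplit : ((1 - X ^ 2) * Φ ^ M : PowerSeries ℚ) = Φ ^ M - X ^ 2 * Φ ^ M := by ring
    rw [hsplit, map_sub]
    rcases Nat.eq_zero_or_pos M with rfl | hM
    · simp [coeff_one, PowerSeries.coeff_X_pow_mul', coeff_X_pow]
    · rw [PowerSeries.coeff_X_pow_mul', if_pos (by omega)]
      have hidx2 : M + 1 - 2 = M - 1 := by omega
      rw [hidx2, hΦdef, aux_trinom_symm M hM, sub_self]
  · -- k = m
    subst heq
    obtain ⟨m', rfl⟩ : ∃ m', k = m' + 1 := ⟨k - 1, by omega⟩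
    rw [if_pos rfl]
    have hsub : m' + 1 - 1 = m' := by omega
    rw [hsub]
    have h1 : ((Φ⁻¹ : PowerSeries ℚ)) ^ m' * Φ ^ m' = 1 := by
      rw [← mul_pow, PowerSeries.inv_mul_cancel _ hΦ0, one_pow]
    have hre : (X * Φ⁻¹ : PowerSeries ℚ) ^ (m' + 1) * ((1 - X ^ 2) * Φ ^ m')
        = X ^ (m' + 1) * ((1 - X ^ 2) * Φ⁻¹) * ((Φ⁻¹) ^ m' * Φ ^ m') := by
      rw [mul_pow, pow_succ]; ring
    rw [hre, h1, mul_one, PowerSeries.coeff_X_pow_mul', if_pos le_rfl, Nat.sub_self,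
      coeff_zero_eq_constantCoeff, map_mul, map_sub, map_one, map_pow, constantCoeff_X,
      PowerSeries.constantCoeff_inv, aux_phi_const]
    norm_num
  · -- k > m
    rw [if_neg (by omega)]
    have hre : (X * Φ⁻¹ : PowerSeries ℚ) ^ k * ((1 - X ^ 2) * Φ ^ (m - 1))
        = X ^ k * ((Φ⁻¹) ^ k * ((1 - X ^ 2) * Φ ^ (m - 1))) := by
      rw [mul_pow]; ring
    rw [hre, PowerSeries.coeff_X_pow_mul', if_neg (by omega)]

/-- For `n ≥ 1`, the coefficient of `z^{n+1}` in `((1-v²)/v)·∑_{h≥1} v^{2h}/(1-v^{2h})`,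
re-expanded in `z` via the substitution `z = v/(1+v+v²)` (i.e. composed with the
compositional inverse `w = v(z)` of `v ↦ v/(1+v+v²)`), equals
`∑_{h≥1} d(h)·[T(n,n+2-2h) - 2T(n,n-2h) + T(n,n-2-2h)]`.
Both sums are truncated at `h = n+1`, beyond which all terms are irrelevant:
`(1/v)·v^{2h}/(1-v^{2h})` is written `v^{2h-1}/(1-v^{2h})`, of order `2h-1 > n+1`
for `h > n+1`, and the trinomial terms vanish for `2h > n+2`. -/
theorem coeff_via_trinomials (n : ℕ) (hn : 1 ≤ n)
    (w : PowerSeries ℚ) (hw0 : constantCoeff w = 0)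
    (hw : PowerSeries.comp (X * (1 + X + X ^ 2)⁻¹) w = X) :
    coeff (n + 1) (PowerSeries.comp
        ((1 - X ^ 2) * ∑ h ∈ Icc 1 (n + 1), X ^ (2 * h - 1) * (1 - X ^ (2 * h))⁻¹) w) =
      ∑ h ∈ Icc 1 (n + 1), (Nat.divisors h).card *
        (trinom n ((n : ℤ) + 2 - 2 * h) - 2 * trinom n ((n : ℤ) - 2 * h) +
          trinom n ((n : ℤ) - 2 - 2 * h)) := by
  classical
  have hΦ0 : constantCoeff (1 + X + X ^ 2 : PowerSeries ℚ) ≠ 0 := by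
    rw [aux_phi_const]; norm_num
  set z : PowerSeries ℚ := X * (1 + X + X ^ 2)⁻¹ with hzdef
  have hz0 : constantCoeff z = 0 := by
    rw [hzdef, map_mul, constantCoeff_X, zero_mul]
  have hcomp_pow : ∀ k : ℕ, (z ^ k).comp w = X ^ k := fun k => by
    rw [aux_comp_pow hw0, hw]
  have hz00 : ∀ k : ℕ, coeff 0 (z ^ (k + 1)) = 0 := fun k => by
    rw [coeff_zero_eq_constantCoeff, map_pow, hz0, zero_pow (Nat.succ_ne_zero _)]
  set S : PowerSeries ℚ := ∑ h ∈ Icc 1 (n + 1), X ^ (2 * h - 1) * (1 - X ^ (2 * h))⁻¹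
    with hSdef
  set F : PowerSeries ℚ := (1 - X ^ 2) * S with hFdef
  have hF0 : constantCoeff F = 0 := by
    have hS0 : constantCoeff S = 0 := by
      rw [hSdef, map_sum]
      refine Finset.sum_eq_zero fun h hh => ?_
      have hh1 := (mem_Icc.mp hh).1
      rw [map_mul, map_pow, constantCoeff_X, zero_pow (by omega), zero_mul]
    rw [hFdef, map_mul, hS0, mul_zero]
  -- step 1 : the two matrix identities, as ℕ-indexed sums
  have hAW : ∀ k m : ℕ, k ≤ n → m ≤ n →
      ∑ d ∈ range (n + 1), coeff (d + 1) (z ^ (k + 1)) * coeff (m + 1) (w ^ (d + 1)) =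
        if k = m then 1 else 0 := by
    intro k m hk hm
    have h2 := congrArg (coeff (m + 1)) (hcomp_pow (k + 1))
    rw [aux_coeff_comp hw0, coeff_X_pow, Finset.sum_range_succ', hz00 k, zero_mul,
      add_zero] at h2
    have hext : ∑ d ∈ range (m + 1),
          coeff (d + 1) (z ^ (k + 1)) * coeff (m + 1) (w ^ (d + 1)) =
        ∑ d ∈ range (n + 1),
          coeff (d + 1) (z ^ (k + 1)) * coeff (m + 1) (w ^ (d + 1)) := by
      refine Finset.sum_subset (Finset.range_subset_range.mpr (by omega)) fun x _ hx => ?_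
      rw [aux_coeff_pow_eq_zero hw0 (by simp only [mem_range] at hx ⊢; omega), mul_zero]
    rw [hext] at h2
    rw [h2]
    by_cases hkm : k = m
    · rw [if_pos hkm, if_pos (by omega)]
    · rw [if_neg hkm, if_neg (by omega)]
  have hAB : ∀ k m : ℕ, k ≤ n → m ≤ n →
      ∑ d ∈ range (n + 1), coeff (d + 1) (z ^ (k + 1)) *
          (if d ≤ m then coeff (m - d) ((1 - X ^ 2) * (1 + X + X ^ 2) ^ m) else 0) =
        if k = m then 1 else 0 := by
    intro k m hk hm
    have horth := aux_orth (k + 1) (m + 1) (by omega) (by omega)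
    rw [← hzdef, Nat.add_sub_cancel] at horth
    rw [coeff_mul, Finset.Nat.sum_antidiagonal_eq_sum_range_succ_mk,
      Finset.sum_range_succ', hz00 k, zero_mul, add_zero] at horth
    have hstep : ∀ d ∈ range (m + 1),
        coeff (d + 1) (z ^ (k + 1)) *
            coeff (m + 1 - (d + 1)) ((1 - X ^ 2) * (1 + X + X ^ 2) ^ m) =
          coeff (d + 1) (z ^ (k + 1)) *
            (if d ≤ m then coeff (m - d) ((1 - X ^ 2) * (1 + X + X ^ 2) ^ m) else 0) := by
      intro d hd
      have hdm := mem_range.mp hd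
      have hidx : m + 1 - (d + 1) = m - d := by omega
      rw [hidx, if_pos (by omega)]
    rw [Finset.sum_congr rfl hstep] at horth
    have hext : ∑ d ∈ range (m + 1), coeff (d + 1) (z ^ (k + 1)) *
          (if d ≤ m then coeff (m - d) ((1 - X ^ 2) * (1 + X + X ^ 2) ^ m) else 0) =
        ∑ d ∈ range (n + 1), coeff (d + 1) (z ^ (k + 1)) *
          (if d ≤ m then coeff (m - d) ((1 - X ^ 2) * (1 + X + X ^ 2) ^ m) else 0) := by
      refine Finset.sum_subset (Finset.range_subset_range.mpr (by omega)) fun x hx hnx => ?_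
      rw [if_neg (by simp only [mem_range] at hnx ⊢; omega), mul_zero]
    rw [hext] at horth
    rw [horth]
    by_cases hkm : k = m
    · rw [if_pos (by omega), if_pos hkm]
    · rw [if_neg (by omega), if_neg hkm]
  -- step 2 : matrix algebra gives the coefficients of powers of w
  have hWB : ∀ d m : ℕ, d ≤ n → m ≤ n →
      coeff (m + 1) (w ^ (d + 1)) =
        if d ≤ m then coeff (m - d) ((1 - X ^ 2) * (1 + X + X ^ 2) ^ m) else 0 := by
    set A : Matrix (Fin (n + 1)) (Fin (n + 1)) ℚ :=
      Matrix.of (fun k d : Fin (n + 1) => coeff ((d : ℕ) + 1) (z ^ ((k : ℕ) + 1)))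
      with hAdef
    set Wm : Matrix (Fin (n + 1)) (Fin (n + 1)) ℚ :=
      Matrix.of (fun d m : Fin (n + 1) => coeff ((m : ℕ) + 1) (w ^ ((d : ℕ) + 1)))
      with hWdef
    set Bm : Matrix (Fin (n + 1)) (Fin (n + 1)) ℚ :=
      Matrix.of (fun d m : Fin (n + 1) =>
        if (d : ℕ) ≤ (m : ℕ) then
          coeff ((m : ℕ) - (d : ℕ)) ((1 - X ^ 2) * (1 + X + X ^ 2) ^ (m : ℕ))
        else 0) with hBdef
    have hA1 : A * Wm = 1 := by
      ext k m
      rw [Matrix.mul_apply, Matrix.one_apply]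
      have hconv : ∑ j : Fin (n + 1), A k j * Wm j m =
          ∑ d ∈ range (n + 1),
            coeff (d + 1) (z ^ ((k : ℕ) + 1)) * coeff ((m : ℕ) + 1) (w ^ (d + 1)) :=
        Fin.sum_univ_eq_sum_range
          (fun d => coeff (d + 1) (z ^ ((k : ℕ) + 1)) * coeff ((m : ℕ) + 1) (w ^ (d + 1)))
          (n + 1)
      rw [hconv, hAW k m (by omega) (by omega)]
      by_cases hkm : (k : ℕ) = (m : ℕ)
      · rw [if_pos hkm, if_pos (Fin.ext hkm)]
      · rw [if_neg hkm, if_neg (fun hh => hkm (by rw [hh]))]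
    have hA2 : A * Bm = 1 := by
      ext k m
      rw [Matrix.mul_apply, Matrix.one_apply]
      have hconv : ∑ j : Fin (n + 1), A k j * Bm j m =
          ∑ d ∈ range (n + 1), coeff (d + 1) (z ^ ((k : ℕ) + 1)) *
            (if d ≤ (m : ℕ) then
              coeff ((m : ℕ) - d) ((1 - X ^ 2) * (1 + X + X ^ 2) ^ (m : ℕ)) else 0) :=
        Fin.sum_univ_eq_sum_range
          (fun d => coeff (d + 1) (z ^ ((k : ℕ) + 1)) *
            (if d ≤ (m : ℕ) then
              coeff ((m : ℕ) - d) ((1 - X ^ 2) * (1 + X + X ^ 2) ^ (m : ℕ)) else 0))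
          (n + 1)
      rw [hconv, hAB k m (by omega) (by omega)]
      by_cases hkm : (k : ℕ) = (m : ℕ)
      · rw [if_pos hkm, if_pos (Fin.ext hkm)]
      · rw [if_neg hkm, if_neg (fun hh => hkm (by rw [hh]))]
    have hmat : Wm = Bm := by
      have hBA : Bm * A = 1 := mul_eq_one_comm.mp hA2
      calc Wm = 1 * Wm := (Matrix.one_mul Wm).symm
        _ = Bm * A * Wm := by rw [hBA]
        _ = Bm * (A * Wm) := Matrix.mul_assoc _ _ _
        _ = Bm * 1 := by rw [hA1]
        _ = Bm := Matrix.mul_one Bm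
    intro d m hd hm
    have := congrFun (congrFun hmat ⟨d, by omega⟩) ⟨m, by omega⟩
    simpa [hWdef, hBdef] using this
  -- step 3 : Lagrange-type coefficient identity
  have key : coeff (n + 1) (F.comp w) =
      coeff (n + 1) (F * ((1 - X ^ 2) * (1 + X + X ^ 2) ^ n)) := by
    rw [aux_coeff_comp hw0, coeff_mul, Finset.Nat.sum_antidiagonal_eq_sum_range_succ_mk]
    refine Finset.sum_congr rfl fun d hd => ?_
    rcases d with _ | d'
    · rw [coeff_zero_eq_constantCoeff, hF0, zero_mul, zero_mul]
    · have hd' : d' ≤ n := by simp only [mem_range] at hd; omega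
      have hidx : n + 1 - (d' + 1) = n - d' := by omega
      rw [hWB d' n hd' le_rfl, if_pos (by omega), hidx]
  rw [key]
  -- step 4 : explicit computation of the right-hand side
  have hrw : F * ((1 - X ^ 2) * (1 + X + X ^ 2) ^ n) =
      ∑ h ∈ Icc 1 (n + 1), X ^ (2 * h - 1) *
        (aux_geom (2 * h) * ((1 - X ^ 2) ^ 2 * (1 + X + X ^ 2) ^ n)) := by
    rw [hFdef, hSdef, Finset.mul_sum, Finset.sum_mul]
    refine Finset.sum_congr rfl fun h hh => ?_
    have hh1 := (mem_Icc.mp hh).1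
    rw [aux_geom_eq (by omega : 1 ≤ 2 * h)]
    ring
  rw [hrw, map_sum]
  rw [Finset.sum_congr rfl fun h hh => aux_coeff_term n h (mem_Icc.mp hh).1 _]
  rw [Finset.sum_comm]
  refine Finset.sum_congr rfl fun m hm => ?_
  obtain ⟨hm1, hm2⟩ := mem_Icc.mp hm
  by_cases hC : 2 * m ≤ n + 2
  · -- main case
    have e1 : (n : ℤ) + 2 - 2 * m = ((n + 2 - 2 * m : ℕ) : ℤ) - ((0 : ℕ) : ℤ) := by
      push_cast; omega
    have e2 : (n : ℤ) - 2 * m = ((n + 2 - 2 * m : ℕ) : ℤ) - ((2 : ℕ) : ℤ) := by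
      push_cast; omega
    have e3 : (n : ℤ) - 2 - 2 * m = ((n + 2 - 2 * m : ℕ) : ℤ) - ((4 : ℕ) : ℤ) := by
      push_cast; omega
    rw [e1, e2, e3, aux_trinom_eq, aux_trinom_eq, aux_trinom_eq]
    have hcombo : coeff (n + 2 - 2 * m) ((X : PowerSeries ℚ) ^ 0 * (1 + X + X ^ 2) ^ n) -
          2 * coeff (n + 2 - 2 * m) ((X : PowerSeries ℚ) ^ 2 * (1 + X + X ^ 2) ^ n) +
          coeff (n + 2 - 2 * m) ((X : PowerSeries ℚ) ^ 4 * (1 + X + X ^ 2) ^ n) =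
        coeff (n + 2 - 2 * m) ((1 - X ^ 2) ^ 2 * (1 + X + X ^ 2) ^ n) := by
      have hsp : ((1 - X ^ 2) ^ 2 * (1 + X + X ^ 2) ^ n : PowerSeries ℚ) =
          (X ^ 0 * (1 + X + X ^ 2) ^ n + X ^ 4 * (1 + X + X ^ 2) ^ n) -
            (X ^ 2 * (1 + X + X ^ 2) ^ n + X ^ 2 * (1 + X + X ^ 2) ^ n) := by ring
      rw [hsp, map_sub, map_add, map_add]
      ring
    rw [hcombo]
    have hcond : ∀ h : ℕ, (h ∣ m ∧ 2 * m ≤ n + 2) ↔ h ∣ m := fun h => and_iff_left hC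
    rw [Finset.sum_congr rfl fun h _ => if_congr (hcond h) rfl rfl]
    rw [← Finset.sum_filter, Finset.sum_const, aux_divisors_filter m n hm1 hm2,
      nsmul_eq_mul]
  · -- degenerate case : 2m > n+2, everything vanishes
    have ht1 : trinom n ((n : ℤ) + 2 - 2 * m) = 0 := by
      rw [trinom, if_pos (by push_cast; omega)]
    have ht2 : trinom n ((n : ℤ) - 2 * m) = 0 := by
      rw [trinom, if_pos (by push_cast; omega)]
    have ht3 : trinom n ((n : ℤ) - 2 - 2 * m) = 0 := by
      rw [trinom, if_pos (by push_cast; omega)]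
    rw [ht1, ht2, ht3]
    rw [Finset.sum_eq_zero fun h _ => if_neg (fun hcc => hC hcc.2)]
    ring
end

section
/- Let F(z,u) and G(z,u) be formal power series in z (with coefficients polynomials in u) with zero constant term in z satisfying F = z*G/(1-G) and G = z*u + z*F/(1-F). Then F equals (1 - zu - z^2 + z^2 u - sqrt(D)) / (2(1 - zu + z)), where D = 1 - 2zu - 2z^2 - 2z^2 u + z^2 u^2 - 2 z^3 u + 2 z^3 u^2 + z^4 - 2 z^4 u + z^4 u^2, i.e., F satisfies the quadratic equation (1 - zu + z) F^2 - (1 - zu - z^2 + z^2 u) F + z^2 u = 0. -/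
open PowerSeries

/-- Bivariate leaf-counting generating function: if `F`, `G` are power series in `z`
(coefficients rational functions in `u`) with zero constant term satisfying
`F = z·G/(1-G)` and `G = z·u + z·F/(1-F)`, then `F` satisfies the quadratic equation
`(1 - zu + z)F² - (1 - zu - z² + z²u)F + z²u = 0`, i.e. `F` is the branch
`(1 - zu - z² + z²u - √D)/(2(1 - zu + z))` of its solution. -/
theorem bivariate_F_quadratic
    (F G : PowerSeries (RatFunc ℚ))
    (hF0 : constantCoeff F = 0)
    (hG0 : constantCoeff G = 0)
    (u : PowerSeries (RatFunc ℚ)) (hu : u = C RatFunc.X)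
    (hF : F = X * G * (1 - G)⁻¹)
    (hG : G = X * u + X * F * (1 - F)⁻¹) :
    (1 - X * u + X) * F ^ 2 - (1 - X * u - X ^ 2 + X ^ 2 * u) * F + X ^ 2 * u = 0 := by
  have hGne : constantCoeff (1 - G) ≠ 0 := by simp [hG0]
  have hFne : constantCoeff (1 - F) ≠ 0 := by simp [hF0]
  have h1 : F * (1 - G) = X * G := by
    rw [hF, mul_assoc, PowerSeries.inv_mul_cancel _ hGne, mul_one]
  have h2 : (G - X * u) * (1 - F) = X * F := by
    have : G - X * u = X * F * (1 - F)⁻¹ := by rw [hG]; ring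
    rw [this, mul_assoc, PowerSeries.inv_mul_cancel _ hFne, mul_one]
  linear_combination (-(1 - F)) * h1 + (-(X + F)) * h2
end

section
/- Setting u = 1 in the bivariate series of the previous context and differentiating with respect to u at u = 1, the resulting leaf-counting generating function, under the substitution z = v/(1+v+v^2), equals R(v) = v(1+v)(1 - v + 2v^2 - v^3) / ((1-v)(1+v+v^2)) as rational functions in v. -/
open PowerSeries

namespace LeafAux

lemma coeff_pow_eq_zero {a : PowerSeries ℚ} (ha : constantCoeff a = 0) {n k : ℕ}
    (h : n < k) : coeff n (a ^ k) = 0 := by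
  have hx : (X : PowerSeries ℚ) ∣ a := X_dvd_iff.mpr ha
  exact X_pow_dvd_iff.mp (pow_dvd_pow_of_dvd hx k) n h

lemma coeff_aeval_congr {a : PowerSeries ℚ} (ha : constantCoeff a = 0) {n : ℕ}
    {p q : Polynomial ℚ} (h : ∀ i ≤ n, p.coeff i = q.coeff i) :
    coeff n (Polynomial.aeval a p) = coeff n (Polynomial.aeval a q) := by
  set N := max p.natDegree q.natDegree + 1 with hN
  rw [Polynomial.aeval_eq_sum_range' (lt_of_le_of_lt (le_max_left _ _) (Nat.lt_succ_self _)),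
    Polynomial.aeval_eq_sum_range' (lt_of_le_of_lt (le_max_right _ _) (Nat.lt_succ_self _)),
    map_sum, map_sum]
  apply Finset.sum_congr rfl
  intro i _
  by_cases hi : i ≤ n
  · rw [h i hi]
  · rw [map_smul, map_smul]
    rw [coeff_pow_eq_zero ha (not_le.mp hi)]
    simp

lemma comp_coeff {f a : PowerSeries ℚ} (ha : constantCoeff a = 0) {n m : ℕ} (h : n < m) :
    coeff n (f.comp a) = coeff n (Polynomial.aeval a (trunc m f)) := by
  rw [PowerSeries.comp, coeff_mk]
  apply coeff_aeval_congr ha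
  intro i hi
  rw [coeff_trunc, coeff_trunc, if_pos (Nat.lt_succ_of_le hi), if_pos (lt_of_le_of_lt hi h)]

end LeafAux

namespace LeafAux

lemma comp_add (f g a : PowerSeries ℚ) : (f + g).comp a = f.comp a + g.comp a := by
  ext n
  simp [PowerSeries.comp, coeff_mk, map_add]

lemma comp_zero (a : PowerSeries ℚ) : (0 : PowerSeries ℚ).comp a = 0 := by
  ext n
  simp [PowerSeries.comp, coeff_mk]

lemma comp_one (a : PowerSeries ℚ) : (1 : PowerSeries ℚ).comp a = 1 := by
  ext n
  simp [PowerSeries.comp, coeff_mk, trunc_one]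

lemma comp_mul {a : PowerSeries ℚ} (ha : constantCoeff a = 0) (f g : PowerSeries ℚ) :
    (f * g).comp a = f.comp a * g.comp a := by
  ext n
  have h1 : coeff n ((f * g).comp a)
      = coeff n (Polynomial.aeval a (trunc (n+1) f * trunc (n+1) g)) := by
    rw [comp_coeff ha (Nat.lt_succ_self n)]
    apply coeff_aeval_congr ha
    intro i hi
    rw [coeff_trunc, if_pos (Nat.lt_succ_of_le hi), ← Polynomial.coeff_coe,
      Polynomial.coe_mul, ← coeff_mul_eq_coeff_trunc_mul_trunc f g (Nat.lt_succ_of_le hi)]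
  rw [h1, map_mul, PowerSeries.coeff_mul, PowerSeries.coeff_mul]
  apply Finset.sum_congr rfl
  intro p hp
  have hpn : p.1 + p.2 = n := Finset.HasAntidiagonal.mem_antidiagonal.mp hp
  rw [comp_coeff ha (Nat.lt_succ_of_le (le_of_add_le_left hpn.le)),
    comp_coeff ha (Nat.lt_succ_of_le (le_of_add_le_right hpn.le))]

lemma comp_X {a : PowerSeries ℚ} (ha : constantCoeff a = 0) :
    (X : PowerSeries ℚ).comp a = a := by
  ext n
  rw [PowerSeries.comp, coeff_mk,
    coeff_aeval_congr ha (q := Polynomial.X) ?_, Polynomial.aeval_X]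
  intro i hi
  rw [coeff_trunc, if_pos (Nat.lt_succ_of_le hi), PowerSeries.coeff_X, Polynomial.coeff_X]
  by_cases h : i = 1 <;> simp [h, eq_comm]

lemma constantCoeff_comp {f a : PowerSeries ℚ} (ha : constantCoeff a = 0) :
    constantCoeff (f.comp a) = constantCoeff f := by
  have : coeff 0 (f.comp a) = coeff 0 f := by
    rw [PowerSeries.comp, coeff_mk,
      coeff_aeval_congr ha (q := Polynomial.C (constantCoeff f)) ?_, Polynomial.aeval_C]
    · simp [PowerSeries.algebraMap_apply]
    · intro i hi
      interval_cases i
      simp [coeff_trunc]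
  simpa using this

noncomputable def compHom (a : PowerSeries ℚ) (ha : constantCoeff a = 0) :
    PowerSeries ℚ →+* PowerSeries ℚ where
  toFun f := f.comp a
  map_one' := comp_one a
  map_mul' := comp_mul ha
  map_zero' := comp_zero a
  map_add' f g := comp_add f g a

end LeafAux

namespace LeafAux

noncomputable def eps : PowerSeries (Polynomial ℚ) →+* PowerSeries ℚ :=
  PowerSeries.map (Polynomial.evalRingHom 1)

noncomputable def Dop (f : PowerSeries (Polynomial ℚ)) : PowerSeries ℚ :=
  PowerSeries.mk fun n => Polynomial.eval 1 (Polynomial.derivative (coeff n f))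

lemma eps_X : eps X = X := PowerSeries.map_X _

lemma eps_u : eps (C Polynomial.X) = 1 := by
  rw [eps, PowerSeries.map_C]
  simp

lemma Dop_add (f g : PowerSeries (Polynomial ℚ)) : Dop (f + g) = Dop f + Dop g := by
  ext n
  simp [Dop, coeff_mk]

lemma Dop_sub (f g : PowerSeries (Polynomial ℚ)) : Dop (f - g) = Dop f - Dop g := by
  ext n
  simp [Dop, coeff_mk]

lemma Dop_zero : Dop 0 = 0 := by
  ext n
  simp [Dop, coeff_mk]

lemma Dop_one : Dop 1 = 0 := by
  ext n
  simp only [Dop, coeff_mk, PowerSeries.coeff_one]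
  split_ifs <;> simp

lemma Dop_X : Dop X = 0 := by
  ext n
  simp only [Dop, coeff_mk, PowerSeries.coeff_X]
  split_ifs <;> simp

lemma Dop_u : Dop (C Polynomial.X) = 1 := by
  ext n
  simp only [Dop, coeff_mk, PowerSeries.coeff_C, PowerSeries.coeff_one]
  split_ifs <;> simp

lemma Dop_mul (f g : PowerSeries (Polynomial ℚ)) :
    Dop (f * g) = Dop f * eps g + eps f * Dop g := by
  ext n
  rw [map_add, PowerSeries.coeff_mul, PowerSeries.coeff_mul, ← Finset.sum_add_distrib,
    Dop, coeff_mk, PowerSeries.coeff_mul, map_sum, Polynomial.eval_finset_sum]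
  apply Finset.sum_congr rfl
  intro p _
  rw [Polynomial.derivative_mul, Polynomial.eval_add, Polynomial.eval_mul, Polynomial.eval_mul]
  simp [Dop, eps, coeff_mk, PowerSeries.coeff_map]

end LeafAux
/-- Let `F(z,u)` satisfy `(1-zu+z)F² - (1-zu-z²+z²u)F + z²u = 0` with `F(0,u) = 0`, and
set `T(z,u) = (z/(1-zu))·1/(1 - F/(1-zu)) + zu - z`, i.e.
`(T - zu + z)(1 - zu - F) = z`.  Then the leaf-count generating function
`R(z) = ∂T/∂u |_{u=1}`, rewritten in `v` via `z = v/(1+v+v²)`, equals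
`v(1+v)(1-v+2v²-v³)/((1-v)(1+v+v²))`. -/
theorem leaf_count_gf
    (F T : PowerSeries (Polynomial ℚ))
    (u : PowerSeries (Polynomial ℚ)) (hu : u = C Polynomial.X)
    (hF0 : constantCoeff F = 0)
    (hFq : (1 - X * u + X) * F ^ 2 - (1 - X * u - X ^ 2 + X ^ 2 * u) * F + X ^ 2 * u = 0)
    (hT : (T - X * u + X) * (1 - X * u - F) = X)
    (R : PowerSeries ℚ)
    (hR : R = PowerSeries.mk fun n =>
      Polynomial.eval 1 (Polynomial.derivative (coeff n T))) :
    PowerSeries.comp R (X * (1 + X + X ^ 2)⁻¹) =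
      X * (1 + X) * (1 - X + 2 * X ^ 2 - X ^ 3) * (1 - X)⁻¹ * (1 + X + X ^ 2)⁻¹ := by
  subst hu
  classical
  open LeafAux in
  -- inverse of 1 + X + X^2
  set iw : PowerSeries ℚ := (1 + X + X ^ 2)⁻¹ with hiwdef
  have hcw : constantCoeff (1 + X + X ^ 2 : PowerSeries ℚ) ≠ 0 := by simp
  have hiw : (1 + X + X ^ 2 : PowerSeries ℚ) * iw = 1 := PowerSeries.mul_inv_cancel _ hcw
  have cciw : constantCoeff iw = 1 := by
    have := congrArg (constantCoeff) hiw
    simpa using this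
  have ha : constantCoeff (X * iw) = 0 := by simp
  set s := LeafAux.compHom (X * iw) ha with hsdef
  have sX : s X = X * iw := LeafAux.comp_X ha
  -- base identities in z-world
  have hRT : R = LeafAux.Dop T := hR
  have epsu := LeafAux.eps_u
  have epsX := LeafAux.eps_X
  have hG0 : constantCoeff (LeafAux.eps F) = 0 := by
    have : coeff 0 (LeafAux.eps F) = 0 := by
      rw [LeafAux.eps, PowerSeries.coeff_map, ← coeff_zero_eq_constantCoeff_apply] at *
      simp [hF0]
    simpa using this
  have E1z : (LeafAux.eps F) ^ 2 - (1 - X) * (LeafAux.eps F) + X ^ 2 = 0 := by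
    have h : LeafAux.eps ((1 - X * C Polynomial.X + X) * F ^ 2 -
        (1 - X * C Polynomial.X - X ^ 2 + X ^ 2 * C Polynomial.X) * F
        + X ^ 2 * C Polynomial.X) = LeafAux.eps 0 := by rw [hFq]
    simp only [map_mul, map_sub, map_add, map_pow, map_one, map_zero, epsX, epsu] at h
    linear_combination h
  have E2z : (LeafAux.eps T) * (1 - X - LeafAux.eps F) = X := by
    have h : LeafAux.eps ((T - X * C Polynomial.X + X) *
        (1 - X * C Polynomial.X - F)) = LeafAux.eps X := by rw [hT]
    simp only [map_mul, map_sub, map_add, map_pow, map_one, epsX, epsu] at h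
    linear_combination h
  have hFq' : (1 - X * C Polynomial.X + X) * (F * F) -
      (1 - X * C Polynomial.X - X * X + (X * X) * C Polynomial.X) * F
      + (X * X) * C Polynomial.X = 0 := by linear_combination hFq
  have E3z : (LeafAux.Dop F) * (2 * (LeafAux.eps F) - 1 + X)
      = X * (LeafAux.eps F) ^ 2 - (X - X ^ 2) * (LeafAux.eps F) - X ^ 2 := by
    have h := congrArg LeafAux.Dop hFq'
    rw [LeafAux.Dop_zero] at h
    simp only [LeafAux.Dop_add, LeafAux.Dop_sub, LeafAux.Dop_mul, LeafAux.Dop_one,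
      LeafAux.Dop_X, LeafAux.Dop_u, map_mul, map_sub, map_add, map_one, epsX, epsu] at h
    linear_combination h
  have E4z : (R - X) * (1 - X - LeafAux.eps F) = (LeafAux.eps T) * (X + LeafAux.Dop F) := by
    have h := congrArg LeafAux.Dop hT
    rw [LeafAux.Dop_X] at h
    simp only [LeafAux.Dop_add, LeafAux.Dop_sub, LeafAux.Dop_mul, LeafAux.Dop_one,
      LeafAux.Dop_X, LeafAux.Dop_u, map_mul, map_sub, map_add, map_one, epsX, epsu] at h
    rw [← hRT] at h
    linear_combination h
  -- apply substitution hom s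
  set g := s (LeafAux.eps F) with hgdef
  set t := s (LeafAux.eps T) with htdef
  set fu := s (LeafAux.Dop F) with hfudef
  set r := s R with hrdef
  have E1 : g ^ 2 - (1 - X * iw) * g + (X * iw) ^ 2 = 0 := by
    have h : s ((LeafAux.eps F) ^ 2 - (1 - X) * (LeafAux.eps F) + X ^ 2) = s 0 := by rw [E1z]
    simp only [map_mul, map_sub, map_add, map_pow, map_one, map_zero, sX] at h
    linear_combination h
  have E2 : t * (1 - X * iw - g) = X * iw := by
    have h : s ((LeafAux.eps T) * (1 - X - LeafAux.eps F)) = s X := by rw [E2z]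
    simp only [map_mul, map_sub, map_add, map_one, sX] at h
    linear_combination h
  have E3 : fu * (2 * g - 1 + X * iw)
      = (X * iw) * g ^ 2 - (X * iw - (X * iw) ^ 2) * g - (X * iw) ^ 2 := by
    have h : s ((LeafAux.Dop F) * (2 * (LeafAux.eps F) - 1 + X))
        = s (X * (LeafAux.eps F) ^ 2 - (X - X ^ 2) * (LeafAux.eps F) - X ^ 2) := by rw [E3z]
    simp only [map_mul, map_sub, map_add, map_pow, map_one, map_ofNat, sX] at h
    linear_combination h
  have E4 : (r - X * iw) * (1 - X * iw - g) = t * (X * iw + fu) := by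
    have h : s ((R - X) * (1 - X - LeafAux.eps F))
        = s ((LeafAux.eps T) * (X + LeafAux.Dop F)) := by rw [E4z]
    simp only [map_mul, map_sub, map_add, map_one, sX] at h
    linear_combination h
  have ccg : constantCoeff g = 0 := by
    rw [hgdef]
    show constantCoeff ((LeafAux.eps F).comp (X * iw)) = 0
    rw [LeafAux.constantCoeff_comp ha, hG0]
  -- solve for g
  have hgkey : (g - X ^ 2 * iw) * (g + X ^ 2 * iw - (1 - X * iw)) = 0 := by
    linear_combination E1 - (X ^ 2 * iw) * hiw
  have hg : g = X ^ 2 * iw := by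
    rcases mul_eq_zero.mp hgkey with h | h
    · exact sub_eq_zero.mp h
    · exfalso
      have := congrArg (constantCoeff) h
      simp [ccg, cciw] at this
  rw [hg] at E2 E3 E4
  -- solve for t
  have htkey : (t - X) * (1 - X * iw - X ^ 2 * iw) = 0 := by
    linear_combination E2 + X * hiw
  have ht : t = X := by
    rcases mul_eq_zero.mp htkey with h | h
    · exact sub_eq_zero.mp h
    · exfalso
      have := congrArg (constantCoeff) h
      simp [cciw] at this
  rw [ht] at E4
  -- solve for fu (cleared denominators)
  have key3 : fu * ((1 - X ^ 2) * (1 + X + X ^ 2) ^ 2) = X ^ 2 * (1 + X) ^ 2 := by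
    linear_combination (-(1 + X + X ^ 2) ^ 3) * E3 +
      ((-1)*iw^2*X^9 + (-3)*iw^2*X^8 + (-5)*iw^2*X^7 + (-5)*iw^2*X^6 + (-3)*iw^2*X^5
        + (-1)*iw^2*X^4 + iw*X^6 + (3)*iw*X^5 + (4)*iw*X^4 + (3)*iw*X^3 + iw*X^2
        + (2)*fu*X^6 + (5)*fu*X^5 + (8)*fu*X^4 + (7)*fu*X^3 + (4)*fu*X^2 + fu*X
        + X^4 + (2)*X^3 + X^2) * hiw
  -- solve for r (cleared denominators), with a spurious (1+X) factor
  have hr2 : (1 + X) * (r * ((1 - X) * (1 + X + X ^ 2)))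
      = (1 + X) * (X + X ^ 3 + X ^ 4 - X ^ 5) := by
    linear_combination ((1 - X ^ 2) * (1 + X + X ^ 2) ^ 2) * E4 + X * key3 +
      (iw*X^7 + (2)*iw*X^6 + iw*X^5 + (-1)*iw*X^4 + (-2)*iw*X^3 + (-1)*iw*X^2
        + (-1)*r*X^6 + (-2)*r*X^5 + (-1)*r*X^4 + r*X^3 + (2)*r*X^2 + r*X
        + (-1)*X^6 + (-1)*X^5 + X^2 + X) * hiw
  have h1pX : (1 + X : PowerSeries ℚ) ≠ 0 := by
    intro h
    have := congrArg (constantCoeff) h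
    simp at this
  have hr : r * ((1 - X) * (1 + X + X ^ 2)) = X + X ^ 3 + X ^ 4 - X ^ 5 :=
    mul_left_cancel₀ h1pX hr2
  -- finish
  have hj : (1 - X : PowerSeries ℚ) * (1 - X)⁻¹ = 1 :=
    PowerSeries.mul_inv_cancel _ (by simp)
  have final : r = X * (1 + X) * (1 - X + 2 * X ^ 2 - X ^ 3) * (1 - X)⁻¹ * iw := by
    calc r = r * (((1 - X) * (1 - X)⁻¹) * ((1 + X + X ^ 2) * iw)) := by rw [hj, hiw]; ring
    _ = (r * ((1 - X) * (1 + X + X ^ 2))) * ((1 - X)⁻¹ * iw) := by ring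
    _ = (X + X ^ 3 + X ^ 4 - X ^ 5) * ((1 - X)⁻¹ * iw) := by rw [hr]
    _ = X * (1 + X) * (1 - X + 2 * X ^ 2 - X ^ 3) * (1 - X)⁻¹ * iw := by ring
  exact final
end

section
/- For real z in a neighborhood of 1/3 with z <= 1/3, the solution v(z) in [0,1] of z = v/(1+v+v^2) satisfies 1 - v(z) ~ sqrt(3) * sqrt(1-3z) as z -> 1/3^-; i.e., the limit of (1 - v(z))/sqrt(1-3z) as z increases to 1/3 is sqrt(3). -/
open Filter

/-- If `v(z) ∈ (0,1]` solves `z = v/(1+v+v²)` for `z ∈ (0,1/3]`, then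
`1 - v(z) ~ √3·√(1-3z)` as `z → 1/3⁻`. -/
theorem one_sub_v_asymptotics
    (v : ℝ → ℝ)
    (hv : ∀ z ∈ Set.Ioc (0 : ℝ) (1 / 3),
      v z ∈ Set.Ioc (0 : ℝ) 1 ∧ z = v z / (1 + v z + (v z) ^ 2)) :
    Tendsto (fun z : ℝ => (1 - v z) / Real.sqrt (1 - 3 * z))
      (nhdsWithin (1 / 3) (Set.Iio (1 / 3))) (nhds (Real.sqrt 3)) := by
  have hmem : ∀ᶠ z in nhdsWithin (1/3 : ℝ) (Set.Iio (1/3)), 0 < z ∧ z < 1/3 := by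
    filter_upwards [eventually_nhdsWithin_of_eventually_nhds
        (eventually_gt_nhds (by norm_num : (0:ℝ) < 1/3)),
      eventually_mem_nhdsWithin] with z h1 h2
    exact ⟨h1, h2⟩
  have key : ∀ z : ℝ, 0 < z → z < 1/3 →
      (1 - v z) / Real.sqrt (1 - 3 * z) = Real.sqrt (1 + v z + (v z)^2) ∧
      0 ≤ 1 - v z ∧ 1 - v z ≤ Real.sqrt (3 * (1 - 3 * z)) := by
    intro z hz0 hz3
    obtain ⟨⟨hw0, hw1⟩, heq⟩ := hv z ⟨hz0, le_of_lt hz3⟩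
    set w := v z with hwdef
    have hd : (0:ℝ) < 1 + w + w^2 := by positivity
    have h13 : 1 - 3 * z = (1 - w)^2 / (1 + w + w^2) := by
      rw [heq]; field_simp; ring
    have hwlt : w < 1 := by
      rcases lt_or_eq_of_le hw1 with h | h
      · exact h
      · exfalso; rw [h] at heq; norm_num at heq; linarith
    have h1w : 0 < 1 - w := by linarith
    have hz3' : 0 ≤ 1 - 3 * z := by linarith
    have hs : Real.sqrt (1 - 3 * z) = (1 - w) / Real.sqrt (1 + w + w^2) := by
      rw [h13, Real.sqrt_div (by positivity), Real.sqrt_sq h1w.le]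
    refine ⟨?_, h1w.le, ?_⟩
    · rw [hs, div_div_eq_mul_div, mul_comm, mul_div_assoc, div_self h1w.ne', mul_one]
    · rw [show (3 : ℝ) * (1 - 3 * z) = (3 * (1 - 3*z)) by ring]
      have hsq : (1 - w)^2 ≤ 3 * (1 - 3 * z) := by
        have : (1 - w)^2 = (1 - 3 * z) * (1 + w + w^2) := by
          rw [h13]; field_simp
        have hda : (1 + w + w^2) ≤ 3 := by nlinarith
        nlinarith [mul_le_mul_of_nonneg_left hda hz3']
      calc 1 - w = Real.sqrt ((1 - w)^2) := (Real.sqrt_sq h1w.le).symm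
        _ ≤ Real.sqrt (3 * (1 - 3 * z)) := Real.sqrt_le_sqrt hsq
  -- v z → 1
  have hg : Tendsto (fun z : ℝ => Real.sqrt (3 * (1 - 3 * z)))
      (nhdsWithin (1/3 : ℝ) (Set.Iio (1/3))) (nhds 0) := by
    have h1 : Tendsto (fun z : ℝ => 3 * (1 - 3 * z))
        (nhdsWithin (1/3 : ℝ) (Set.Iio (1/3))) (nhds 0) := by
      have hc : Continuous (fun z : ℝ => 3 * (1 - 3 * z)) := by fun_prop
      have := (hc.tendsto (1/3 : ℝ)).mono_left
        (nhdsWithin_le_nhds (s := Set.Iio (1/3 : ℝ)))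
      norm_num at this
      exact this
    have h2 := (Real.continuous_sqrt.tendsto 0).comp h1
    rw [Real.sqrt_zero] at h2
    exact h2
  have hsub : Tendsto (fun z : ℝ => 1 - v z)
      (nhdsWithin (1/3 : ℝ) (Set.Iio (1/3))) (nhds 0) := by
    apply squeeze_zero' (by filter_upwards [hmem] with z hz; exact (key z hz.1 hz.2).2.1)
      (by filter_upwards [hmem] with z hz; exact (key z hz.1 hz.2).2.2) hg
  have hvt : Tendsto v (nhdsWithin (1/3 : ℝ) (Set.Iio (1/3))) (nhds 1) := by
    have := (tendsto_const_nhds.sub hsub :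
      Tendsto (fun z : ℝ => (1:ℝ) - (1 - v z)) _ (nhds ((1:ℝ) - 0)))
    simpa using this
  have hfin : Tendsto (fun z : ℝ => Real.sqrt (1 + v z + (v z)^2))
      (nhdsWithin (1/3 : ℝ) (Set.Iio (1/3))) (nhds (Real.sqrt 3)) := by
    have h1 : Tendsto (fun z : ℝ => 1 + v z + (v z)^2)
        (nhdsWithin (1/3 : ℝ) (Set.Iio (1/3))) (nhds 3) := by
      have h2 := ((tendsto_const_nhds (x := (1:ℝ))).add hvt).add (hvt.pow 2)
      norm_num at h2
      exact h2
    exact (Real.continuous_sqrt.tendsto 3).comp h1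
  refine hfin.congr' ?_
  filter_upwards [hmem] with z hz
  exact ((key z hz.1 hz.2).1).symm
end

section
/- For 0 < v < 1, the Lambert-type series L(v) = sum_{h>=1} v^{2h}/(1-v^{2h}) satisfies L(v) ~ -log(1-v)/(2(1-v)) as v -> 1^-; i.e., the ratio of L(v) to -log(1-v)/(2(1-v)) tends to 1. -/
open Filter

open Real in

lemma lambert_sum_bounds (q : ℝ) (h0 : 0 < q) (h1 : q < 1) :
    -Real.log (1 - q) / (1 - q) ≤ (∑' h : ℕ, q ^ (h + 1) / (1 - q ^ (h + 1))) ∧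
    (∑' h : ℕ, q ^ (h + 1) / (1 - q ^ (h + 1))) ≤ -Real.log (1 - q) / (1 - q) + q / (1 - q) := by
  have hq : 0 < 1 - q := by linarith
  have hpow : ∀ n : ℕ, 0 < 1 - q ^ (n + 1) := fun n => by
    have : q ^ (n + 1) < 1 := pow_lt_one₀ h0.le h1 (Nat.succ_ne_zero n)
    linarith
  -- identity
  have ident : ∀ n : ℕ, ((n : ℝ)) * (1 - q) - (1 - q ^ n) = (1 - q) * ∑ j ∈ Finset.range n, (1 - q ^ j) := by
    intro n
    have hg : (∑ j ∈ Finset.range n, q ^ j) * (q - 1) = q ^ n - 1 := geom_sum_mul q n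
    have hs : ∑ j ∈ Finset.range n, ((1:ℝ) - q ^ j) = n - ∑ j ∈ Finset.range n, q ^ j := by
      rw [Finset.sum_sub_distrib, Finset.sum_const, Finset.card_range]; simp
    rw [hs]; nlinarith [hg]
  -- bound b1 : 1 - q^(n+1) ≤ (n+1)*(1-q)
  have b1 : ∀ n : ℕ, 1 - q ^ (n + 1) ≤ ((n : ℝ) + 1) * (1 - q) := by
    intro n
    have h := ident (n + 1)
    have hnn : (0:ℝ) ≤ (1 - q) * ∑ j ∈ Finset.range (n+1), (1 - q ^ j) := by
      apply mul_nonneg hq.le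
      apply Finset.sum_nonneg
      intro j _
      have : q ^ j ≤ 1 := pow_le_one₀ h0.le h1.le
      linarith
    push_cast at h
    linarith
  -- key : (n+1)*(1-q) - (1-q^(n+1)) ≤ ((n+1)*(1-q)) * (1-q^(n+1))
  have key : ∀ n : ℕ, ((n : ℝ) + 1) * (1 - q) - (1 - q ^ (n + 1)) ≤ (((n : ℝ) + 1) * (1 - q)) * (1 - q ^ (n + 1)) := by
    intro n
    have h := ident (n + 1)
    push_cast at h
    have hb : ∑ j ∈ Finset.range (n+1), ((1:ℝ) - q ^ j) ≤ ((n : ℝ) + 1) * (1 - q ^ (n + 1)) := by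
      calc ∑ j ∈ Finset.range (n+1), ((1:ℝ) - q ^ j)
          ≤ ∑ j ∈ Finset.range (n+1), (1 - q ^ (n+1)) := by
            apply Finset.sum_le_sum
            intro j hj
            have : q ^ (n+1) ≤ q ^ j := pow_le_pow_of_le_one h0.le h1.le (Nat.le_of_lt_succ (Finset.mem_range.mp hj) |>.trans (Nat.le_succ n))
            linarith
        _ = ((n : ℝ) + 1) * (1 - q ^ (n+1)) := by
            rw [Finset.sum_const, Finset.card_range]; push_cast; ring
    nlinarith [mul_le_mul_of_nonneg_left hb hq.le]
  -- per-term lower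
  have lower_pt : ∀ n : ℕ, q ^ (n + 1) / (((n:ℝ) + 1) * (1 - q)) ≤ q ^ (n + 1) / (1 - q ^ (n + 1)) := by
    intro n
    apply div_le_div_of_nonneg_left (pow_nonneg h0.le _) (hpow n) (b1 n)
  -- per-term upper
  have upper_pt : ∀ n : ℕ, q ^ (n + 1) / (1 - q ^ (n + 1)) ≤ q ^ (n + 1) / (((n:ℝ) + 1) * (1 - q)) + q ^ (n + 1) := by
    intro n
    have hc : (0:ℝ) < ((n:ℝ) + 1) * (1 - q) := by positivity
    have ha : (0:ℝ) ≤ q ^ (n + 1) := pow_nonneg h0.le _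
    rw [div_add' _ _ _ hc.ne', div_le_div_iff₀ (hpow n) hc]
    nlinarith [mul_nonneg ha (sub_nonneg.mpr (key n)), key n]
  -- summability
  have habs : |q| < 1 := by rw [abs_of_pos h0]; exact h1
  have hgeo : Summable (fun n : ℕ => q ^ (n + 1)) := by
    simpa [pow_succ] using (summable_geometric_of_lt_one h0.le h1).mul_right q
  have hmain_nonneg : ∀ n : ℕ, 0 ≤ q ^ (n + 1) / (1 - q ^ (n + 1)) := fun n =>
    div_nonneg (pow_nonneg h0.le _) (hpow n).le
  have hmain_le : ∀ n : ℕ, q ^ (n + 1) / (1 - q ^ (n + 1)) ≤ q ^ (n + 1) / (1 - q) := by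
    intro n
    apply div_le_div_of_nonneg_left (pow_nonneg h0.le _) hq
    have : q ^ (n + 1) ≤ q := by
      simpa using pow_le_pow_of_le_one h0.le h1.le (Nat.one_le_iff_ne_zero.mpr (Nat.succ_ne_zero n))
    linarith
  have smain : Summable (fun n : ℕ => q ^ (n + 1) / (1 - q ^ (n + 1))) :=
    Summable.of_nonneg_of_le hmain_nonneg hmain_le (hgeo.div_const _)
  -- lower sum
  have hlowsum : HasSum (fun n : ℕ => q ^ (n + 1) / (((n:ℝ) + 1) * (1 - q))) (-Real.log (1 - q) / (1 - q)) := by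
    have := (hasSum_pow_div_log_of_abs_lt_one habs).div_const (1 - q)
    simpa [div_div] using this
  -- geometric shifted sum
  have hgsum : HasSum (fun n : ℕ => q ^ (n + 1)) (q / (1 - q)) := by
    have := (hasSum_geometric_of_lt_one h0.le h1).mul_left q
    simpa [pow_succ, mul_comm, div_eq_mul_inv] using this
  constructor
  · calc -Real.log (1 - q) / (1 - q) = ∑' n : ℕ, q ^ (n + 1) / (((n:ℝ) + 1) * (1 - q)) := hlowsum.tsum_eq.symm
      _ ≤ ∑' n : ℕ, q ^ (n + 1) / (1 - q ^ (n + 1)) := Summable.tsum_le_tsum lower_pt hlowsum.summable smain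
  · calc (∑' n : ℕ, q ^ (n + 1) / (1 - q ^ (n + 1)))
        ≤ ∑' n : ℕ, (q ^ (n + 1) / (((n:ℝ) + 1) * (1 - q)) + q ^ (n + 1)) :=
          Summable.tsum_le_tsum upper_pt smain (hlowsum.summable.add hgsum.summable)
      _ = -Real.log (1 - q) / (1 - q) + q / (1 - q) := (hlowsum.add hgsum).tsum_eq

/-- For `0 < v < 1`, the Lambert-type series `L(v) = ∑_{h≥1} v^{2h}/(1-v^{2h})` satisfies
`L(v) ~ -log(1-v)/(2(1-v))` as `v → 1⁻`. -/
theorem lambert_asymptotics :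
    Tendsto (fun v : ℝ =>
        (∑' h : ℕ, v ^ (2 * (h + 1)) / (1 - v ^ (2 * (h + 1)))) /
          (-Real.log (1 - v) / (2 * (1 - v))))
      (nhdsWithin 1 (Set.Ioo 0 1)) (nhds 1) := by
  set l : Filter ℝ := nhdsWithin 1 (Set.Ioo 0 1) with hl
  have hmem : ∀ᶠ v in l, v ∈ Set.Ioo (0:ℝ) 1 := eventually_mem_nhdsWithin
  have hle : l ≤ nhds 1 := nhdsWithin_le_nhds
  -- abbreviations
  set D : ℝ → ℝ := fun v => -Real.log (1 - v) / (2 * (1 - v)) with hD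
  set A : ℝ → ℝ := fun v => -Real.log (1 - v ^ 2) / (1 - v ^ 2) with hA
  -- basic facts for v in Ioo 0 1
  have hfacts : ∀ v ∈ Set.Ioo (0:ℝ) 1, 0 < 1 - v ∧ 0 < 1 + v ∧ Real.log (1 - v) < 0 ∧ 0 < D v := by
    intro v hv
    obtain ⟨hv0, hv1⟩ := hv
    have h1 : 0 < 1 - v := by linarith
    have h2 : 0 < 1 + v := by linarith
    have h3 : Real.log (1 - v) < 0 := Real.log_neg h1 (by linarith)
    exact ⟨h1, h2, h3, div_pos (by linarith) (by linarith)⟩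
  -- tendsto of -log(1-v) to atTop
  have h1v : Tendsto (fun v : ℝ => 1 - v) l (nhdsWithin 0 (Set.Ioi 0)) := by
    apply tendsto_nhdsWithin_of_tendsto_nhds_of_eventually_within
    · have : Tendsto (fun v : ℝ => 1 - v) (nhds 1) (nhds (1 - 1)) :=
        (continuous_const.sub continuous_id).tendsto 1
      simpa using this.mono_left hle
    · filter_upwards [hmem] with v hv
      exact Set.mem_Ioi.mpr (by linarith [hv.2])
  have hlogbot : Tendsto (fun v : ℝ => Real.log (1 - v)) l atBot :=
    Real.tendsto_log_nhdsGT_zero.comp h1v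
  have hlogtop : Tendsto (fun v : ℝ => -Real.log (1 - v)) l atTop :=
    tendsto_neg_atBot_atTop.comp hlogbot
  -- 1+v tends to 2
  have h1p : Tendsto (fun v : ℝ => 1 + v) l (nhds 2) := by
    have : Tendsto (fun v : ℝ => 1 + v) (nhds 1) (nhds (1 + 1)) :=
      (continuous_const.add continuous_id).tendsto 1
    simpa [one_add_one_eq_two] using this.mono_left hle
  -- log(1+v) tends to log 2
  have hlog2 : Tendsto (fun v : ℝ => Real.log (1 + v)) l (nhds (Real.log 2)) :=
    ((Real.continuousAt_log (by norm_num)).tendsto.comp h1p)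
  -- ratio of logs tends to 0
  have hratio : Tendsto (fun v : ℝ => Real.log (1 + v) / Real.log (1 - v)) l (nhds 0) := by
    have h := (hlog2.div_atTop hlogtop).neg
    simpa [div_neg] using h
  -- lower bound ratio tends to 1
  have hlow : Tendsto (fun v : ℝ => A v / D v) l (nhds 1) := by
    have hphi : Tendsto (fun v : ℝ => (2 / (1 + v)) * (1 + Real.log (1 + v) / Real.log (1 - v))) l (nhds 1) := by
      have t1 : Tendsto (fun v : ℝ => 2 / (1 + v)) l (nhds 1) := by
        have := (tendsto_const_nhds (α := ℝ) (x := (2:ℝ)) (f := l)).div h1p (by norm_num)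
        rwa [div_self two_ne_zero] at this
      have t2 : Tendsto (fun v : ℝ => 1 + Real.log (1 + v) / Real.log (1 - v)) l (nhds 1) := by
        simpa using (tendsto_const_nhds (α := ℝ) (x := (1:ℝ)) (f := l)).add hratio
      simpa using t1.mul t2
    apply hphi.congr'
    filter_upwards [hmem] with v hv
    obtain ⟨h1, h2, h3, h4⟩ := hfacts v hv
    have hsq : 1 - v ^ 2 = (1 - v) * (1 + v) := by ring
    have hlogm : Real.log (1 - v ^ 2) = Real.log (1 - v) + Real.log (1 + v) := by
      rw [hsq, Real.log_mul h1.ne' h2.ne']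
    rw [hA, hD]
    simp only
    rw [hlogm, hsq]
    field_simp [h1.ne', h2.ne', h3.ne]
  -- extra term tends to 0
  have hextra : Tendsto (fun v : ℝ => (v ^ 2 / (1 - v ^ 2)) / D v) l (nhds 0) := by
    have hpsi : Tendsto (fun v : ℝ => 2 * v ^ 2 / ((1 + v) * (-Real.log (1 - v)))) l (nhds 0) := by
      have hnum : Tendsto (fun v : ℝ => 2 * v ^ 2) l (nhds 2) := by
        have : Tendsto (fun v : ℝ => 2 * v ^ 2) (nhds 1) (nhds (2 * 1 ^ 2)) := by
          exact (continuous_const.mul (continuous_pow 2)).tendsto 1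
        simpa using this.mono_left hle
      have hden : Tendsto (fun v : ℝ => (1 + v) * (-Real.log (1 - v))) l atTop :=
        Tendsto.pos_mul_atTop (by norm_num) h1p hlogtop
      exact hnum.div_atTop hden
    apply hpsi.congr'
    filter_upwards [hmem] with v hv
    obtain ⟨h1, h2, h3, h4⟩ := hfacts v hv
    have hsq : 1 - v ^ 2 = (1 - v) * (1 + v) := by ring
    rw [hD]
    simp only
    rw [hsq]
    field_simp [h1.ne', h2.ne', h3.ne]
  have hup : Tendsto (fun v : ℝ => (A v + v ^ 2 / (1 - v ^ 2)) / D v) l (nhds 1) := by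
    have := hlow.add hextra
    rw [add_zero] at this
    apply this.congr
    intro v
    rw [add_div]
  -- squeeze
  apply tendsto_of_tendsto_of_tendsto_of_le_of_le' hlow hup
  · filter_upwards [hmem] with v hv
    obtain ⟨h1, h2, h3, h4⟩ := hfacts v hv
    have hq0 : 0 < v ^ 2 := pow_pos hv.1 2
    have hq1 : v ^ 2 < 1 := by nlinarith [hv.1, hv.2]
    obtain ⟨hlb, hub⟩ := lambert_sum_bounds (v ^ 2) hq0 hq1
    have hrw : (∑' h : ℕ, v ^ (2 * (h + 1)) / (1 - v ^ (2 * (h + 1)))) =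
        ∑' h : ℕ, (v ^ 2) ^ (h + 1) / (1 - (v ^ 2) ^ (h + 1)) := by
      congr 1; funext h; rw [pow_mul]
    rw [hrw]
    exact (div_le_div_iff_of_pos_right h4).mpr hlb
  · filter_upwards [hmem] with v hv
    obtain ⟨h1, h2, h3, h4⟩ := hfacts v hv
    have hq0 : 0 < v ^ 2 := pow_pos hv.1 2
    have hq1 : v ^ 2 < 1 := by nlinarith [hv.1, hv.2]
    obtain ⟨hlb, hub⟩ := lambert_sum_bounds (v ^ 2) hq0 hq1
    have hrw : (∑' h : ℕ, v ^ (2 * (h + 1)) / (1 - v ^ (2 * (h + 1)))) =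
        ∑' h : ℕ, (v ^ 2) ^ (h + 1) / (1 - (v ^ 2) ^ (h + 1)) := by
      congr 1; funext h; rw [pow_mul]
    rw [hrw]
    have hub' : (∑' h : ℕ, (v ^ 2) ^ (h + 1) / (1 - (v ^ 2) ^ (h + 1))) ≤ A v + v ^ 2 / (1 - v ^ 2) := hub
    exact (div_le_div_iff_of_pos_right h4).mpr hub'
end
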